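/- For every integer n ≥ 3 and every a > 0, the integral ∫_0^1 [(2n−3)x² − 1] · f(a(1+x)) · f(a(1−x)) dx is negative, where f(t) = t^{n-1}/(1 − e^{-t})². -/

import Mathlib

open Real Set MeasureTheory intervalIntegral

noncomputable def f16 (n : ℕ) (t : ℝ) : ℝ := t ^ (n - 1) / (1 - Real.exp (-t)) ^ 2

namespace S16

lemma E_pos {t : ℝ} (ht : 0 < t) : 0 < 1 - Real.exp (-t) := by
  have : Real.exp (-t) < 1 := Real.exp_lt_one_iff.mpr (by linarith)
  linarith

/-- ψ -/
noncomputable def psi (t : ℝ) : ℝ := t / (1 - Real.exp (-t))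

lemma psi_pos {t : ℝ} (ht : 0 < t) : 0 < psi t := div_pos ht (E_pos ht)

lemma psi_nonneg {t : ℝ} (ht : 0 ≤ t) : 0 ≤ psi t := by
  rcases eq_or_lt_of_le ht with h | h
  · simp [psi, ← h]
  · exact (psi_pos h).le

lemma psi_le {t : ℝ} (ht : 0 ≤ t) : psi t ≤ 1 + t := by
  rcases eq_or_lt_of_le ht with h | h
  · simp [psi, ← h]
  · have hE := E_pos h
    rw [psi, div_le_iff₀ hE]
    have h1 : (1 + t) * Real.exp (-t) ≤ 1 := by
      have hexp : 0 < Real.exp (-t) := Real.exp_pos _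
      have e0 : Real.exp t * Real.exp (-t) = 1 := by rw [← Real.exp_add]; simp
      nlinarith [mul_le_mul_of_nonneg_right (Real.add_one_le_exp t) hexp.le]
    nlinarith

/-- L = (log ψ)' -/
noncomputable def L (t : ℝ) : ℝ := t⁻¹ - (Real.exp t - 1)⁻¹

lemma expm1_pos {t : ℝ} (ht : 0 < t) : 0 < Real.exp t - 1 := by
  have := Real.add_one_le_exp t
  linarith

lemma key_ineq {t : ℝ} (ht : 0 < t) : t ^ 2 * Real.exp t < (Real.exp t - 1) ^ 2 := by
  have h := Real.self_lt_sinh_iff.mpr (half_pos ht)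
  rw [Real.sinh_eq] at h
  have h2 : t < Real.exp (t/2) - Real.exp (-(t/2)) := by linarith
  have hp : 0 < Real.exp (t/2) := Real.exp_pos _
  have h3 : t * Real.exp (t/2) < Real.exp t - 1 := by
    have := mul_lt_mul_of_pos_right h2 hp
    have e1 : Real.exp (t/2) * Real.exp (t/2) = Real.exp t := by
      rw [← Real.exp_add]; ring_nf
    have e2 : Real.exp (-(t/2)) * Real.exp (t/2) = 1 := by
      rw [← Real.exp_add]; simp
    nlinarith
  have h4 : 0 < t * Real.exp (t/2) := mul_pos ht hp
  have := mul_self_lt_mul_self h4.le h3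
  have e1 : Real.exp (t/2) * Real.exp (t/2) = Real.exp t := by
    rw [← Real.exp_add]; ring_nf
  nlinarith

lemma L_hasDeriv {t : ℝ} (ht : 0 < t) :
    HasDerivAt L (-(t ^ 2)⁻¹ + Real.exp t / (Real.exp t - 1) ^ 2) t := by
  have h1 : HasDerivAt (fun s : ℝ => s⁻¹) (-(t^2)⁻¹) t := by
    simpa using hasDerivAt_inv (ne_of_gt ht)
  have h2 : HasDerivAt (fun s : ℝ => Real.exp s - 1) (Real.exp t) t :=
    (Real.hasDerivAt_exp t).sub_const 1
  have h3 : HasDerivAt (fun s : ℝ => (Real.exp s - 1)⁻¹)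
      (-Real.exp t / (Real.exp t - 1) ^ 2) t := h2.inv (ne_of_gt (expm1_pos ht))
  have := h1.sub h3
  exact this.congr_deriv (by ring)

lemma L_anti : StrictAntiOn L (Ioi 0) := by
  apply strictAntiOn_of_deriv_neg (convex_Ioi 0)
  · apply ContinuousOn.sub
    · exact continuousOn_inv₀.mono (fun x hx => ne_of_gt hx)
    · apply ContinuousOn.inv₀
      · fun_prop
      · exact fun x hx => ne_of_gt (expm1_pos hx)
  · intro x hx
    rw [interior_Ioi] at hx
    rw [(L_hasDeriv hx).deriv]
    have h := key_ineq hx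
    have h1 : 0 < (Real.exp x - 1) ^ 2 := pow_pos (expm1_pos hx) 2
    have h2 : (0:ℝ) < x ^ 2 := pow_pos hx 2
    have hA : Real.exp x / (Real.exp x - 1) ^ 2 * (Real.exp x - 1) ^ 2 = Real.exp x :=
      div_mul_cancel₀ _ (ne_of_gt h1)
    have hB : (x ^ 2)⁻¹ * x ^ 2 = 1 := inv_mul_cancel₀ (ne_of_gt h2)
    nlinarith [h, hA, hB, mul_pos h1 h2]


/-- ψ' -/
noncomputable def P (t : ℝ) : ℝ :=
  (1 - Real.exp (-t) - t * Real.exp (-t)) / (1 - Real.exp (-t)) ^ 2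

lemma psi_hasDeriv {t : ℝ} (ht : 0 < t) : HasDerivAt psi (P t) t := by
  have hE : HasDerivAt (fun s : ℝ => 1 - Real.exp (-s)) (Real.exp (-t)) t := by
    have h1 : HasDerivAt (fun s : ℝ => Real.exp (-s)) (Real.exp (-t) * (-1)) t :=
      HasDerivAt.exp (hasDerivAt_neg t)
    simpa using h1.const_sub 1
  have := (hasDerivAt_id t).div hE (ne_of_gt (E_pos ht))
  exact this.congr_deriv (by unfold P; simp only [id_eq, one_mul])

lemma P_eq {t : ℝ} (ht : 0 < t) : P t = psi t * L t := by
  have hE : (1 : ℝ) - Real.exp (-t) ≠ 0 := ne_of_gt (E_pos ht)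
  have he : Real.exp t - 1 ≠ 0 := ne_of_gt (expm1_pos ht)
  have het : Real.exp t ≠ 0 := (Real.exp_pos t).ne'
  have hneg : Real.exp (-t) = (Real.exp t)⁻¹ := Real.exp_neg t
  rw [P, psi, L, hneg] at *
  field_simp

lemma key_cross {s t : ℝ} (hs : 0 < s) (hst : s < t) : P t * psi s < P s * psi t := by
  have ht : 0 < t := hs.trans hst
  have hL : L t < L s := L_anti (Set.mem_Ioi.mpr hs) (Set.mem_Ioi.mpr ht) hst
  have hps := psi_pos hs
  have hpt := psi_pos ht
  rw [P_eq hs, P_eq ht]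
  nlinarith [mul_lt_mul_of_pos_left hL (mul_pos hps hpt)]


noncomputable def phi (a x : ℝ) : ℝ := psi (a * (1 - x)) * psi (a * (1 + x))

lemma phi_pos {a x : ℝ} (ha : 0 < a) (hx0 : 0 ≤ x) (hx1 : x < 1) : 0 < phi a x :=
  mul_pos (psi_pos (by nlinarith)) (psi_pos (by nlinarith))

lemma phi_hasDeriv {a x : ℝ} (ha : 0 < a) (hx : x ∈ Ioo (0:ℝ) 1) :
    HasDerivAt (phi a)
      (P (a * (1 - x)) * (-a) * psi (a * (1 + x)) +
        psi (a * (1 - x)) * (P (a * (1 + x)) * a)) x := by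
  have hu : HasDerivAt (fun y : ℝ => a * (1 - y)) (-a) x := by
    simpa using ((hasDerivAt_id x).const_sub 1).const_mul a
  have hv : HasDerivAt (fun y : ℝ => a * (1 + y)) a x := by
    simpa using ((hasDerivAt_id x).const_add 1).const_mul a
  have hup : 0 < a * (1 - x) := by nlinarith [hx.1, hx.2]
  have hvp : 0 < a * (1 + x) := by nlinarith [hx.1, hx.2]
  have h1 : HasDerivAt (fun y => psi (a * (1 - y))) (P (a * (1 - x)) * (-a)) x :=
    (psi_hasDeriv hup).comp (h := fun y : ℝ => a * (1 - y)) x hu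
  have h2 : HasDerivAt (fun y => psi (a * (1 + y))) (P (a * (1 + x)) * a) x :=
    (psi_hasDeriv hvp).comp (h := fun y : ℝ => a * (1 + y)) x hv
  exact h1.mul h2

lemma phi_deriv_neg {a x : ℝ} (ha : 0 < a) (hx : x ∈ Ioo (0:ℝ) 1) :
    deriv (phi a) x < 0 := by
  rw [(phi_hasDeriv ha hx).deriv]
  have hup : 0 < a * (1 - x) := by nlinarith [hx.1, hx.2]
  have hst : a * (1 - x) < a * (1 + x) := by nlinarith [hx.1, hx.2]
  have := key_cross hup hst
  nlinarith [this, ha]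

lemma E_cont : Continuous (fun t : ℝ => 1 - Real.exp (-t)) := by fun_prop

lemma phi_anti {a : ℝ} (ha : 0 < a) : StrictAntiOn (phi a) (Ico 0 1) := by
  apply strictAntiOn_of_deriv_neg (convex_Ico 0 1)
  · apply ContinuousOn.mul
    · apply ContinuousOn.div
      · fun_prop
      · fun_prop
      · intro x hx
        exact ne_of_gt (E_pos (by nlinarith [hx.1, hx.2]))
    · apply ContinuousOn.div
      · fun_prop
      · fun_prop
      · intro x hx
        exact ne_of_gt (E_pos (by nlinarith [hx.1, hx.2]))
  · intro x hx
    rw [interior_Ico] at hx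
    exact phi_deriv_neg ha hx


noncomputable def w (m : ℕ) (x : ℝ) : ℝ := ((2 * m + 3) * x ^ 2 - 1) * (1 - x ^ 2) ^ m

lemma w_cont (m : ℕ) : Continuous (w m) := by unfold w; fun_prop

lemma G_hasDeriv (m : ℕ) (x : ℝ) :
    HasDerivAt (fun y : ℝ => y * (1 - y ^ 2) ^ (m + 1)) (-(w m x)) x := by
  have h2 : HasDerivAt (fun y : ℝ => 1 - y ^ 2) (-(2 * x)) x := by
    simpa using (hasDerivAt_pow 2 x).const_sub 1
  have h1 : HasDerivAt (fun y : ℝ => (1 - y ^ 2) ^ (m + 1))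
      ((m + 1 : ℕ) * (1 - x ^ 2) ^ m * (-(2 * x))) x := by
    simpa using h2.fun_pow (m + 1)
  have := (hasDerivAt_id x).mul h1
  refine this.congr_deriv ?_
  unfold w
  simp only [id_eq, one_mul]
  push_cast
  rw [pow_succ]
  ring

lemma w_int_zero (m : ℕ) : (∫ x in (0:ℝ)..1, w m x) = 0 := by
  have h := intervalIntegral.integral_eq_sub_of_hasDerivAt
    (f := fun y : ℝ => y * (1 - y ^ 2) ^ (m + 1)) (f' := fun x => -(w m x))
    (fun x _ => G_hasDeriv m x) ((w_cont m).neg.intervalIntegrable 0 1)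
  simp only [one_pow, sub_self, one_mul, mul_zero, zero_mul] at h
  have h2 : (∫ x in (0:ℝ)..1, -(w m x)) = - ∫ x in (0:ℝ)..1, w m x :=
    intervalIntegral.integral_neg
  rw [h2] at h
  have : (0:ℝ) ^ (m+1) = 0 := zero_pow (Nat.succ_ne_zero m)
  rw [this] at h
  linarith


lemma phi_le {a x : ℝ} (ha : 0 < a) (hx0 : 0 ≤ x) (hx1 : x ≤ 1) :
    phi a x ≤ (1 + 2 * a) ^ 2 := by
  have h1 : 0 ≤ a * (1 - x) := by nlinarith
  have h2 : 0 ≤ a * (1 + x) := by nlinarith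
  have b1 := psi_le h1
  have b2 := psi_le h2
  have n1 := psi_nonneg h1
  have n2 := psi_nonneg h2
  unfold phi
  nlinarith

lemma phi_nonneg {a x : ℝ} (ha : 0 < a) (hx0 : 0 ≤ x) (hx1 : x ≤ 1) : 0 ≤ phi a x :=
  mul_nonneg (psi_nonneg (by nlinarith)) (psi_nonneg (by nlinarith))

lemma phi_meas (a : ℝ) : Measurable (phi a) := by
  unfold phi psi
  apply Measurable.mul <;> exact Measurable.div (by fun_prop) (by fun_prop)

lemma J_int {m : ℕ} {a : ℝ} (ha : 0 < a) :
    IntervalIntegrable (fun x => w m x * (phi a x) ^ 2) volume 0 1 := by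
  rw [intervalIntegrable_iff, Set.uIoc_of_le (zero_le_one' ℝ)]
  have hfin : IsFiniteMeasure (volume.restrict (Ioc (0:ℝ) 1)) := by
    constructor
    rw [Measure.restrict_apply_univ]
    exact measure_Ioc_lt_top
  apply MeasureTheory.Integrable.mono'
    (g := fun _ => ((2 * m + 3) * (1 + 2 * a) ^ 4 : ℝ)) (integrable_const _)
  · exact ((w_cont m).measurable.mul ((phi_meas a).pow_const 2)).aestronglyMeasurable
  · rw [ae_restrict_iff' measurableSet_Ioc]
    filter_upwards with x hx
    have hx0 : (0:ℝ) ≤ x := hx.1.le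
    have hx1 : x ≤ 1 := hx.2
    have hb1 : |(2 * (m:ℝ) + 3) * x ^ 2 - 1| ≤ 2 * (m:ℝ) + 3 := by
      rw [abs_le]
      have hm0 : (0:ℝ) ≤ (m:ℝ) := Nat.cast_nonneg m
      have hxx : x ^ 2 ≤ 1 := by nlinarith
      constructor <;> nlinarith
    have hb2 : |(1 - x ^ 2) ^ m| ≤ 1 := by
      rw [abs_pow]
      apply pow_le_one₀ (abs_nonneg _)
      rw [abs_le]
      constructor <;> nlinarith
    have hp0 := phi_nonneg ha hx0 hx1
    have hp1 := phi_le ha hx0 hx1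
    have hphi : (phi a x) ^ 2 ≤ (1 + 2 * a) ^ 4 := by nlinarith
    have habs : |w m x| ≤ 2 * (m:ℝ) + 3 := by
      unfold w
      rw [abs_mul]
      calc |(2 * (m:ℝ) + 3) * x ^ 2 - 1| * |(1 - x ^ 2) ^ m|
          ≤ (2 * (m:ℝ) + 3) * 1 := mul_le_mul hb1 hb2 (abs_nonneg _) (by positivity)
        _ = 2 * (m:ℝ) + 3 := mul_one _
    rw [Real.norm_eq_abs, abs_mul, abs_of_nonneg (pow_nonneg hp0 2)]
    calc |w m x| * phi a x ^ 2 ≤ (2 * (m:ℝ) + 3) * (1 + 2 * a) ^ 4 :=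
          mul_le_mul habs hphi (pow_nonneg hp0 2) (by positivity)
      _ = _ := by ring

lemma prod_eq {m : ℕ} {a : ℝ} (ha : 0 < a) {x : ℝ} (hx0 : 0 ≤ x) (hx1 : x ≤ 1) :
    ((2 * ((3 + m : ℕ) : ℝ) - 3) * x ^ 2 - 1) * f16 (3 + m) (a * (1 + x)) *
      f16 (3 + m) (a * (1 - x)) = a ^ (2 * m) * (w m x * (phi a x) ^ 2) := by
  have hn1 : (3 + m) - 1 = m + 2 := by omega
  rcases eq_or_lt_of_le hx1 with h1 | h1
  · subst h1
    have hph : phi a 1 = 0 := by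
      unfold phi psi
      rw [show a * (1 - (1:ℝ)) = 0 by ring]
      simp
    have hf : f16 (3 + m) (a * (1 - 1)) = 0 := by
      unfold f16
      rw [show a * (1 - (1:ℝ)) = 0 by ring, hn1]
      simp
    rw [hf, hph]
    ring
  · have hu : 0 < a * (1 - x) := by nlinarith
    have hv : 0 < a * (1 + x) := by nlinarith
    have hEu : (1 - Real.exp (-(a * (1 - x)))) ≠ 0 := ne_of_gt (E_pos hu)
    have hEv : (1 - Real.exp (-(a * (1 + x)))) ≠ 0 := ne_of_gt (E_pos hv)
    unfold f16 w phi psi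
    rw [hn1]
    have hprod : (a*(1+x))^(m+2) * (a*(1-x))^(m+2)
        = a^(2*m) * (1-x^2)^m * (a*(1+x))^2 * (a*(1-x))^2 := by
      have hm : (a*(1-x))^m * (a*(1+x))^m = a^(2*m) * (1-x^2)^m := by
        rw [← mul_pow, pow_mul, ← mul_pow]
        congr 1
        ring
      linear_combination ((a*(1+x))^2 * (a*(1-x))^2) * hm
    have hc : (2 * ((3 + m : ℕ) : ℝ) - 3) = 2 * (m:ℝ) + 3 := by push_cast; ring
    rw [hc]
    obtain ⟨Ev, hEv'⟩ : ∃ E, (1 : ℝ) - Real.exp (-(a * (1 + x))) = E := ⟨_, rfl⟩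
    obtain ⟨Eu, hEu'⟩ : ∃ E, (1 : ℝ) - Real.exp (-(a * (1 - x))) = E := ⟨_, rfl⟩
    rw [hEv', hEu']
    linear_combination (((2 * (m:ℝ) + 3) * x ^ 2 - 1) / (Ev^2 * Eu^2)) * hprod

end S16

set_option maxHeartbeats 800000 in
open S16 in
theorem stmt_16 (n : ℕ) (hn : 3 ≤ n) (a : ℝ) (ha : 0 < a) :
    (∫ x in (0 : ℝ)..1,
      ((2 * (n : ℝ) - 3) * x ^ 2 - 1) * f16 n (a * (1 + x)) * f16 n (a * (1 - x))) < 0 := by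
  obtain ⟨m, rfl⟩ := Nat.exists_eq_add_of_le hn
  set x₀ := Real.sqrt ((2 * (m:ℝ) + 3)⁻¹) with hx₀def
  have hm0 : (0:ℝ) ≤ (m:ℝ) := Nat.cast_nonneg m
  have h2m3 : (0:ℝ) < 2 * (m:ℝ) + 3 := by positivity
  have hx0pos : 0 < x₀ := Real.sqrt_pos.mpr (by positivity)
  have hx0sq : x₀ ^ 2 = (2 * (m:ℝ) + 3)⁻¹ := Real.sq_sqrt (by positivity)
  have hx0lt1 : x₀ < 1 := by
    have h : x₀ ^ 2 < 1 := by
      rw [hx0sq]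
      rw [inv_lt_one_iff₀]
      right
      linarith
    nlinarith
  set c := (phi a x₀) ^ 2 with hcdef
  set K := fun x => w m x * (phi a x) ^ 2 - c * w m x with hKdef
  have hwint : IntervalIntegrable (w m) volume 0 1 := (w_cont m).intervalIntegrable 0 1
  have hJint := J_int (m := m) ha
  have hKint : IntervalIntegrable K volume 0 1 := hJint.sub (hwint.const_mul c)
  have hK1 : IntervalIntegrable K volume 0 x₀ := by
    apply hKint.mono_set
    rw [Set.uIcc_of_le hx0pos.le, Set.uIcc_of_le (zero_le_one' ℝ)]
    exact Set.Icc_subset_Icc le_rfl hx0lt1.le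
  have hK2 : IntervalIntegrable K volume x₀ 1 := by
    apply hKint.mono_set
    rw [Set.uIcc_of_le hx0lt1.le, Set.uIcc_of_le (zero_le_one' ℝ)]
    exact Set.Icc_subset_Icc hx0pos.le le_rfl
  have hcong : (∫ x in (0:ℝ)..1,
        ((2 * ((3 + m : ℕ) : ℝ) - 3) * x ^ 2 - 1) * f16 (3 + m) (a * (1 + x)) *
          f16 (3 + m) (a * (1 - x)))
      = ∫ x in (0:ℝ)..1, a ^ (2 * m) * (w m x * (phi a x) ^ 2) := by
    apply intervalIntegral.integral_congr
    intro x hx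
    rw [Set.uIcc_of_le (zero_le_one' ℝ)] at hx
    exact prod_eq ha hx.1 hx.2
  rw [hcong, intervalIntegral.integral_const_mul]
  apply mul_neg_of_pos_of_neg (by positivity)
  have hsplit : (∫ x in (0:ℝ)..1, w m x * (phi a x) ^ 2) = ∫ x in (0:ℝ)..1, K x := by
    have h1 : (∫ x in (0:ℝ)..1, K x)
        = (∫ x in (0:ℝ)..1, w m x * (phi a x) ^ 2) - ∫ x in (0:ℝ)..1, c * w m x :=
      intervalIntegral.integral_sub hJint (hwint.const_mul c)
    rw [h1, intervalIntegral.integral_const_mul, w_int_zero]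
    ring
  rw [hsplit]
  have hadj : (∫ x in (0:ℝ)..1, K x) = (∫ x in (0:ℝ)..x₀, K x) + ∫ x in x₀..1, K x :=
    (intervalIntegral.integral_add_adjacent_intervals hK1 hK2).symm
  rw [hadj]
  have hpiece1 : (∫ x in (0:ℝ)..x₀, K x) < 0 := by
    have hpos : ∀ x ∈ Set.Ioo (0:ℝ) x₀, 0 < -K x := by
      intro x hx
      have hx1 : x < 1 := hx.2.trans hx0lt1
      have hxsq : x ^ 2 < x₀ ^ 2 := by nlinarith [hx.1, hx.2]
      have hwneg : w m x < 0 := by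
        apply mul_neg_of_neg_of_pos
        · have : (2 * (m:ℝ) + 3) * x₀ ^ 2 = 1 := by
            rw [hx0sq]; field_simp
          nlinarith
        · exact pow_pos (by nlinarith) m
      have hphigt : phi a x₀ < phi a x :=
        phi_anti ha ⟨hx.1.le, hx1⟩ ⟨hx0pos.le, hx0lt1⟩ hx.2
      have h0 : 0 ≤ phi a x₀ := phi_nonneg ha hx0pos.le hx0lt1.le
      have hclt : c < (phi a x) ^ 2 := by rw [hcdef]; nlinarith
      simp only [hKdef]
      nlinarith
    have h := intervalIntegral.intervalIntegral_pos_of_pos_on hK1.neg hpos hx0pos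
    have h2 : (0:ℝ) < -∫ x in (0:ℝ)..x₀, K x := by
      simpa [intervalIntegral.integral_neg] using h
    linarith
  have hpiece2 : (∫ x in x₀..1, K x) < 0 := by
    have hpos : ∀ x ∈ Set.Ioo x₀ (1:ℝ), 0 < -K x := by
      intro x hx
      have hxp : 0 < x := hx0pos.trans hx.1
      have hxsq : x₀ ^ 2 < x ^ 2 := by nlinarith [hx.1]
      have hwpos : 0 < w m x := by
        apply mul_pos
        · have : (2 * (m:ℝ) + 3) * x₀ ^ 2 = 1 := by
            rw [hx0sq]; field_simp
          nlinarith
        · exact pow_pos (by nlinarith [hx.2]) m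
      have hphilt : phi a x < phi a x₀ :=
        phi_anti ha ⟨hx0pos.le, hx0lt1⟩ ⟨hxp.le, hx.2⟩ hx.1
      have h0 : 0 ≤ phi a x := phi_nonneg ha hxp.le hx.2.le
      have hclt : (phi a x) ^ 2 < c := by rw [hcdef]; nlinarith
      simp only [hKdef]
      nlinarith
    have h := intervalIntegral.intervalIntegral_pos_of_pos_on hK2.neg hpos hx0lt1
    have h2 : (0:ℝ) < -∫ x in x₀..1, K x := by
      simpa [intervalIntegral.integral_neg] using h
    linarith
  linarith
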